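/- In the unary max-register encoding, writing a value K > prevMax by adding ∑_{k=prevMax+1}^{K} 2^(k*n+i) to the register preserves the invariant that the register is the interleaved encoding of the per-process unary maxima, and the reconstructed maximum over all components is the maximum of all values written so far. -/

import Mathlib

/-- Unary interleaved max-register encoding: process `i` stores its maximum
`m i` in unary, with bits at positions `k*n + i` for `1 ≤ k ≤ m i`. -/
def encodeU (n : ℕ) (m : Fin n → ℕ) : ℕ :=
  ∑ i : Fin n, ∑ k ∈ Finset.Icc 1 (m i), 2 ^ (k * n + (i : ℕ))

lemma encodeU_lt (n : ℕ) (m : Fin n → ℕ) :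
    encodeU n m < 2 ^ ((Finset.univ.sup m + 1) * n) := by
  set s := Finset.univ.sup m with hs
  have h1 : encodeU n m =
      ∑ p ∈ (Finset.univ : Finset (Fin n)).sigma (fun i => Finset.Icc 1 (m i)),
        2 ^ (p.2 * n + (p.1 : ℕ)) := by
    rw [encodeU, Finset.sum_sigma]
  have hinj : ∀ p ∈ (Finset.univ : Finset (Fin n)).sigma (fun i => Finset.Icc 1 (m i)),
      ∀ q ∈ (Finset.univ : Finset (Fin n)).sigma (fun i => Finset.Icc 1 (m i)),
      (fun p : Σ _ : Fin n, ℕ => p.2 * n + (p.1 : ℕ)) p =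
        (fun p : Σ _ : Fin n, ℕ => p.2 * n + (p.1 : ℕ)) q → p = q := by
    rintro ⟨i, k⟩ _ ⟨j, l⟩ _ h
    simp only at h
    have hi : (i : ℕ) < n := i.isLt
    have hj : (j : ℕ) < n := j.isLt
    have hk : k = l := by
      rcases lt_trichotomy k l with h' | h' | h'
      · exfalso
        have : k * n + n ≤ l * n := by
          have := Nat.succ_le_of_lt h'
          calc k * n + n = (k + 1) * n := by ring
          _ ≤ l * n := Nat.mul_le_mul_right n this
        omega
      · exact h'
      · exfalso
        have : l * n + n ≤ k * n := by
          have := Nat.succ_le_of_lt h'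
          calc l * n + n = (l + 1) * n := by ring
          _ ≤ k * n := Nat.mul_le_mul_right n this
        omega
    subst hk
    have : (i : ℕ) = (j : ℕ) := by omega
    have : i = j := Fin.ext this
    subst this; rfl
  rw [h1, ← Finset.sum_image hinj]
  have hsub : ((Finset.univ : Finset (Fin n)).sigma (fun i => Finset.Icc 1 (m i))).image
      (fun p : Σ _ : Fin n, ℕ => p.2 * n + (p.1 : ℕ)) ⊆ Finset.range ((s + 1) * n) := by
    intro x hx
    simp only [Finset.mem_image, Finset.mem_sigma, Finset.mem_Icc] at hx
    obtain ⟨⟨i, k⟩, ⟨_, _, hk⟩, rfl⟩ := hx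
    have hms : m i ≤ s := Finset.le_sup (Finset.mem_univ i)
    have hi : (i : ℕ) < n := i.isLt
    simp only [Finset.mem_range]
    have : k * n ≤ s * n := Nat.mul_le_mul_right n (le_trans hk hms)
    calc k * n + (i : ℕ) < k * n + n := by omega
    _ ≤ s * n + n := by omega
    _ = (s + 1) * n := by ring
  calc _ ≤ ∑ j ∈ Finset.range ((s + 1) * n), 2 ^ j :=
        Finset.sum_le_sum_of_subset hsub
  _ < 2 ^ ((s + 1) * n) := by
        rw [Nat.geomSum_eq (le_refl 2)]
        have hp : 0 < 2 ^ ((s + 1) * n) := Nat.pow_pos (by norm_num)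
        omega

lemma le_encodeU (n : ℕ) (hn : 1 ≤ n) (m : Fin n → ℕ) (hs : 1 ≤ Finset.univ.sup m) :
    2 ^ (Finset.univ.sup m * n) ≤ encodeU n m := by
  set s := Finset.univ.sup m with hsdef
  obtain ⟨i, _, hi⟩ := Finset.exists_mem_eq_sup (Finset.univ : Finset (Fin n))
    (Finset.univ_nonempty_iff.2 ⟨⟨0, hn⟩⟩) m
  have h1 : 2 ^ (s * n) ≤ 2 ^ (s * n + (i : ℕ)) :=
    Nat.pow_le_pow_right (by norm_num) (Nat.le_add_right _ _)
  have h2 : 2 ^ (s * n + (i : ℕ)) ≤ ∑ k ∈ Finset.Icc 1 (m i), 2 ^ (k * n + (i : ℕ)) := by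
    have hmem : s ∈ Finset.Icc 1 (m i) := by
      rw [Finset.mem_Icc]; exact ⟨hs, hi.le⟩
    exact Finset.single_le_sum (f := fun k => 2 ^ (k * n + (i : ℕ))) (fun k _ => Nat.zero_le _) hmem
  have h3 : ∑ k ∈ Finset.Icc 1 (m i), 2 ^ (k * n + (i : ℕ)) ≤ encodeU n m :=
    Finset.single_le_sum (f := fun j => ∑ k ∈ Finset.Icc 1 (m j), 2 ^ (k * n + (j : ℕ)))
      (fun j _ => Nat.zero_le _) (Finset.mem_univ i)
  omega

/-- A `MaxWrite(K)` with `K >` the old maximum, performed by adding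
`∑_{k=m i + 1}^{K} 2^(k*n+i)`, preserves the encoding invariant; moreover the
maximum over all components is recoverable from any encoded register value. -/
theorem stmt_3 (n : ℕ) (hn : 1 ≤ n) :
    (∀ (m : Fin n → ℕ) (i : Fin n) (K : ℕ), m i < K →
      encodeU n m + ∑ k ∈ Finset.Icc (m i + 1) K, 2 ^ (k * n + (i : ℕ))
        = encodeU n (Function.update m i K)) ∧
    (∃ f : ℕ → ℕ, ∀ m : Fin n → ℕ, f (encodeU n m) = Finset.univ.sup m) := by
  constructor
  · intro m i K hK
    rw [encodeU, encodeU, ← Finset.sum_erase_add _ _ (Finset.mem_univ i),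
      ← Finset.sum_erase_add _ _ (Finset.mem_univ i)]
    have heq : ∀ j ∈ Finset.univ.erase i,
        ∑ k ∈ Finset.Icc 1 (Function.update m i K j), 2 ^ (k * n + (j : ℕ)) =
        ∑ k ∈ Finset.Icc 1 (m j), 2 ^ (k * n + (j : ℕ)) := by
      intro j hj
      rw [Function.update_of_ne (Finset.mem_erase.1 hj).1]
    rw [Finset.sum_congr rfl heq, Function.update_self, add_assoc]
    congr 1
    have h1 : Finset.Icc 1 (m i) = Finset.Ioc 0 (m i) := by
      ext x; simp [Nat.lt_iff_add_one_le]
    have h2 : Finset.Icc (m i + 1) K = Finset.Ioc (m i) K := by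
      ext x; simp only [Finset.mem_Icc, Finset.mem_Ioc]; omega
    have h3 : Finset.Icc 1 K = Finset.Ioc 0 K := by
      ext x; simp [Nat.lt_iff_add_one_le]
    rw [h1, h2, h3]
    exact Finset.sum_Ioc_consecutive _ (Nat.zero_le _) (le_of_lt hK)
  · refine ⟨fun R => Nat.log 2 R / n, fun m => ?_⟩
    set s := Finset.univ.sup m with hsdef
    rcases Nat.eq_zero_or_pos s with hs0 | hs1
    · have hall : ∀ i, m i = 0 := by
        intro i
        have := Finset.le_sup (f := m) (Finset.mem_univ i)
        omega
      have : encodeU n m = 0 := by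
        rw [encodeU]
        apply Finset.sum_eq_zero
        intro i _
        rw [hall i]
        simp
      rw [this, hs0]
      simp
    · have hlt : encodeU n m < 2 ^ ((s + 1) * n) := encodeU_lt n m
      have hle : 2 ^ (s * n) ≤ encodeU n m := le_encodeU n hn m hs1
      have hlog_lt : Nat.log 2 (encodeU n m) < (s + 1) * n := by
        apply Nat.log_lt_of_lt_pow _ hlt
        have : 0 < 2 ^ (s * n) := Nat.pow_pos (by norm_num)
        omega
      have hlog_ge : s * n ≤ Nat.log 2 (encodeU n m) := Nat.le_log_of_pow_le (by norm_num) hle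
      show Nat.log 2 (encodeU n m) / n = s
      rw [Nat.div_eq_of_lt_le hlog_ge (by omega)]
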